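/- Let E be finite, H ⊆ ℓ²(E) a subspace of dimension r with basis v₁,…,v_r. Then for distinct e₁,…,e_r ∈ E: P^H({e₁,…,e_r}) = (det[⟨v_i, e_j⟩])² / det[⟨v_i, v_j⟩] (in the real case). -/

import Mathlib

open scoped RealInnerProductSpace

lemma gram_posDef {F : Type*} [NormedAddCommGroup F] [InnerProductSpace ℝ F] {r : ℕ}
    {v : Fin r → F} (hv : LinearIndependent ℝ v) :
    (Matrix.of fun i j => (inner ℝ (v i) (v j) : ℝ)).PosDef := by
  refine Matrix.PosDef.of_dotProduct_mulVec_pos ?_ ?_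
  · ext i j
    simp [Matrix.conjTranspose_apply, real_inner_comm]
  · intro x hx
    have h0 : ∑ i, x i • v i ≠ 0 := by
      intro h
      exact hx (funext fun i => Fintype.linearIndependent_iff.mp hv x h i)
    have key : dotProduct (star x) ((Matrix.of fun i j => (inner ℝ (v i) (v j) : ℝ)).mulVec x)
        = ⟪∑ i, x i • v i, ∑ j, x j • v j⟫ := by
      simp [dotProduct, Matrix.mulVec, sum_inner, inner_sum,
        real_inner_smul_left, real_inner_smul_right, Finset.mul_sum]
      rw [← real_inner_self_eq_norm_sq]
      simp only [sum_inner, inner_sum, real_inner_smul_left, real_inner_smul_right, Finset.mul_sum]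
      rw [Finset.sum_comm]
      exact Finset.sum_congr rfl fun i _ => Finset.sum_congr rfl fun j _ => by ring
    rw [key]
    exact lt_of_le_of_ne real_inner_self_nonneg (Ne.symm (inner_self_ne_zero.mpr h0))

/-- For `H = span(v₁,…,v_r)` with the `v_i` linearly independent and distinct points
`e₁,…,e_r ∈ E`, `P^H({e₁,…,e_r}) = (det[⟨v_i, e_j⟩])² / det[⟨v_i, v_j⟩]`.
Here `W` with `w` models `Λʳ ℓ²(E)` with the determinantal inner product, `ξ` is a
unit multivector of `H`, and `P^H({B}) = |⟨ξ, θ_B⟩|²`. -/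
theorem stmt14 {E W : Type*} [Fintype E] [LinearOrder E]
    [NormedAddCommGroup W] [InnerProductSpace ℝ W]
    {r : ℕ} (w : MultilinearMap ℝ (fun _ : Fin r => EuclideanSpace ℝ E) W)
    (hw : ∀ u v, (inner ℝ (w u) (w v) : ℝ)
      = (Matrix.of fun i j => (inner ℝ (u i) (v j) : ℝ)).det)
    (v : Fin r → EuclideanSpace ℝ E) (hv : LinearIndependent ℝ v)
    (H : Submodule ℝ (EuclideanSpace ℝ E)) (hH : Submodule.span ℝ (Set.range v) = H)
    (ξ : W)
    (hξmem : ξ ∈ Submodule.span ℝ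
      {x : W | ∃ u : Fin r → EuclideanSpace ℝ E, (∀ i, u i ∈ H) ∧ w u = x})
    (hξ : ‖ξ‖ = 1)
    (e : Fin r → E) (he : Function.Injective e)
    (hcard : (Finset.image e Finset.univ).card = r) :
    (inner ℝ ξ (w (fun i => EuclideanSpace.single
        ((Finset.image e Finset.univ).orderEmbOfFin hcard i) (1:ℝ))) : ℝ) ^ 2
      = (Matrix.of fun i j =>
            (inner ℝ (v i) (EuclideanSpace.single (e j) (1:ℝ)) : ℝ)).det ^ 2
        / (Matrix.of fun i j => (inner ℝ (v i) (v j) : ℝ)).det := by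
  classical
  set Gv : Matrix (Fin r) (Fin r) ℝ := Matrix.of fun i j => (inner ℝ (v i) (v j) : ℝ) with hGv
  have hGpos : 0 < Gv.det := (gram_posDef hv).det_pos
  -- any w u with u i ∈ H is a multiple of w v
  have key : ∀ u : Fin r → EuclideanSpace ℝ E, (∀ i, u i ∈ H) → ∃ c : ℝ, w u = c • w v := by
    intro u hu
    have hmem : ∀ i, ∃ a : Fin r → ℝ, ∑ k, a k • v k = u i := by
      intro i
      have := hu i
      rw [← hH] at this
      exact (Submodule.mem_span_range_iff_exists_fun ℝ).mp this
    choose A hA using hmem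
    set AM : Matrix (Fin r) (Fin r) ℝ := Matrix.of A with hAM
    have hMuv : (Matrix.of fun i j => (inner ℝ (u i) (v j) : ℝ)) = AM * Gv := by
      ext i j
      rw [Matrix.mul_apply]
      simp only [Matrix.of_apply, ← hA i, sum_inner, real_inner_smul_left]
      rfl
    have hMuu : (Matrix.of fun i j => (inner ℝ (u i) (u j) : ℝ)) = AM * Gv * AM.transpose := by
      ext i j
      rw [Matrix.mul_apply]
      have h1 : ∀ l, (AM * Gv) i l = (inner ℝ (u i) (v l) : ℝ) := by
        intro l; rw [← hMuv]; rfl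
      simp only [Matrix.transpose_apply, h1, Matrix.of_apply]
      conv_lhs => rw [← hA j]
      rw [inner_sum]
      exact Finset.sum_congr rfl fun l _ => by rw [real_inner_smul_right]; exact mul_comm _ _
    have huu : (inner ℝ (w u) (w u) : ℝ) = AM.det * Gv.det * AM.det := by
      rw [hw, hMuu, Matrix.det_mul, Matrix.det_mul, Matrix.det_transpose]
    have huv : (inner ℝ (w u) (w v) : ℝ) = AM.det * Gv.det := by
      rw [hw, hMuv, Matrix.det_mul]
    have hvv : (inner ℝ (w v) (w v) : ℝ) = Gv.det := hw v v
    refine ⟨AM.det, ?_⟩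
    have hvu : (inner ℝ (w v) (w u) : ℝ) = AM.det * Gv.det := by
      rw [real_inner_comm]; exact huv
    have hz : w u - AM.det • w v = 0 := by
      rw [← @inner_self_eq_zero ℝ]
      rw [inner_sub_left, inner_sub_right, inner_sub_right,
        real_inner_smul_left, real_inner_smul_right, real_inner_smul_left,
        real_inner_smul_right, huu, huv, hvv, hvu]
      ring
    rwa [sub_eq_zero] at hz
  -- ξ is a multiple of w v
  have hsub : {x : W | ∃ u : Fin r → EuclideanSpace ℝ E, (∀ i, u i ∈ H) ∧ w u = x}
      ⊆ (Submodule.span ℝ {w v} : Submodule ℝ W) := by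
    rintro x ⟨u, hu, rfl⟩
    obtain ⟨c, hc⟩ := key u hu
    exact Submodule.mem_span_singleton.mpr ⟨c, hc.symm⟩
  obtain ⟨c, hc⟩ := Submodule.mem_span_singleton.mp
    ((Submodule.span_le.mpr hsub) hξmem)
  have hvv : (inner ℝ (w v) (w v) : ℝ) = Gv.det := hw v v
  have hc2 : c ^ 2 * Gv.det = 1 := by
    have h1 : (inner ℝ ξ ξ : ℝ) = 1 := by
      rw [real_inner_self_eq_norm_sq, hξ]; norm_num
    rw [← hc, real_inner_smul_left, real_inner_smul_right, hvv] at h1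
    nlinarith [h1]
  -- permutation relating e and the order embedding
  set s : Finset E := Finset.image e Finset.univ with hs
  set f : Fin r → E := fun i => s.orderEmbOfFin hcard i with hf
  have hfe : ∀ j, ∃ k, f k = e j := by
    intro j
    have h1 : e j ∈ s := Finset.mem_image_of_mem e (Finset.mem_univ j)
    have h2 : e j ∈ Set.range ⇑(s.orderEmbOfFin hcard) := by
      rw [Finset.range_orderEmbOfFin]
      exact h1
    exact h2
  choose g hg using hfe
  have hginj : Function.Injective g := by
    intro a b hab
    apply he
    rw [← hg a, ← hg b, hab]
  let σ : Equiv.Perm (Fin r) := Equiv.ofBijective g (Finite.injective_iff_bijective.mp hginj)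
  set Mf : Matrix (Fin r) (Fin r) ℝ :=
    Matrix.of fun i j => (inner ℝ (v i) (EuclideanSpace.single (f j) (1:ℝ)) : ℝ) with hMf
  set Me : Matrix (Fin r) (Fin r) ℝ :=
    Matrix.of fun i j => (inner ℝ (v i) (EuclideanSpace.single (e j) (1:ℝ)) : ℝ) with hMe
  have hMeMf : Me = Mf.submatrix id σ := by
    ext i j
    simp only [Matrix.submatrix_apply, id, hMf, hMe, Matrix.of_apply]
    have : f (σ j) = e j := hg j
    rw [this]
  have hdets : Me.det ^ 2 = Mf.det ^ 2 := by
    rw [hMeMf, Matrix.det_permute' σ Mf]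
    rcases Int.units_eq_one_or (Equiv.Perm.sign σ) with h | h <;> rw [h] <;> push_cast <;> ring
  -- final computation
  have hwθ : (inner ℝ (w v) (w fun i => EuclideanSpace.single (f i) (1:ℝ)) : ℝ) = Mf.det := hw v _
  rw [← hc, real_inner_smul_left]
  have : (inner ℝ (w v) (w fun i => EuclideanSpace.single
      ((Finset.image e Finset.univ).orderEmbOfFin hcard i) (1:ℝ)) : ℝ) = Mf.det := hwθ
  rw [this, hdets, eq_div_iff hGpos.ne']
  linear_combination Mf.det ^ 2 * hc2
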